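/- Let (R,m) be a 2-dimensional quasi-unmixed Noetherian local ring, v an m-valuation of R, and for each positive integer i let c(v)_i = {a ∈ R : v(a) ≥ i}. Then there exists a positive real λ such that ℓ(R/c(v)_i) ≥ λ·i² for all positive integers i. -/

import Mathlib

set_option synthInstance.maxHeartbeats 1000000
set_option maxHeartbeats 1000000
/-- The composition length of an `R`-module `M`, as a real number
(the Krull dimension of its submodule lattice; junk value `0` if infinite). -/
noncomputable def rlen (R : Type*) [Ring R] (M : Type*) [AddCommGroup M] [Module R M] : ℝ :=
  (((Order.krullDim (Submodule R M)).unbotD 0).toNat : ℝ)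

open Filter in
/-- The Hilbert–Samuel multiplicity of an ideal `I` in a `d`-dimensional ring:
`d! · lim_n ℓ(R/Iⁿ)/n^d`. -/
noncomputable def hsMult {R : Type*} [CommRing R] (d : ℕ) (I : Ideal R) : ℝ :=
  (d.factorial : ℝ) * limUnder atTop (fun n : ℕ => rlen R (R ⧸ I ^ n) / (n : ℝ) ^ d)

/-- `R` is quasi-unmixed: every minimal prime `P` of the `m`-adic completion
satisfies `dim (R̂/P) = dim R`. -/
def IsQuasiUnmixed (R : Type*) [CommRing R] [IsLocalRing R] : Prop :=
  ∀ P ∈ minimalPrimes (AdicCompletion (IsLocalRing.maximalIdeal R) R),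
    ringKrullDim (AdicCompletion (IsLocalRing.maximalIdeal R) R ⧸ P) = ringKrullDim R

lemma krullDim_le_of_natFun {γ : Type*} [Preorder γ] (H : γ → ℕ) (C : ℕ)
    (hs : ∀ x y : γ, x < y → H x < H y) (hb : ∀ x, H x ≤ C) :
    Order.krullDim γ ≤ (C : WithBot ℕ∞) := by
  rw [Order.krullDim]
  refine iSup_le fun p => ?_
  have key : ∀ k : ℕ, (hk : k ≤ p.length) → k ≤ H (p ⟨k, by omega⟩) := by
    intro k
    induction k with
    | zero => intro _; exact Nat.zero_le _
    | succ k ih =>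
      intro hk
      have h1 := ih (by omega)
      have h2 : H (p ⟨k, by omega⟩) < H (p ⟨k+1, by omega⟩) :=
        hs _ _ (p.strictMono (Fin.mk_lt_mk.mpr (by omega)))
      omega
  have : p.length ≤ C := le_trans (key p.length le_rfl) (hb _)
  exact_mod_cast this


lemma enat_toNat_lt {u v : ℕ∞} (h : u < v) (hv : v ≠ ⊤) : u.toNat < v.toNat := by
  have hu : u ≠ ⊤ := h.ne_top
  rw [← ENat.coe_toNat hu, ← ENat.coe_toNat hv] at h
  exact_mod_cast h

lemma ext_krullDim {R M : Type*} [Ring R] [AddCommGroup M] [Module R M] (N : Submodule R M)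
    (a b : ℕ) (ha : Order.krullDim (Submodule R N) ≤ (a : WithBot ℕ∞))
    (hb : Order.krullDim (Submodule R (M ⧸ N)) ≤ (b : WithBot ℕ∞)) :
    Order.krullDim (Submodule R M) ≤ ((a + b : ℕ) : WithBot ℕ∞) := by
  have hF : ∀ x : Submodule R M, Order.height (Submodule.comap N.subtype x) ≤ (a : ℕ∞) := by
    intro x
    have := (Order.height_le_krullDim (Submodule.comap N.subtype x)).trans ha
    exact_mod_cast this
  have hG : ∀ x : Submodule R M, Order.height (Submodule.map N.mkQ x) ≤ (b : ℕ∞) := by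
    intro x
    have := (Order.height_le_krullDim (Submodule.map N.mkQ x)).trans hb
    exact_mod_cast this
  refine krullDim_le_of_natFun
    (fun x => (Order.height (Submodule.comap N.subtype x)).toNat
      + (Order.height (Submodule.map N.mkQ x)).toNat) (a + b) ?_ ?_
  · intro x y hxy
    have hFle : Submodule.comap N.subtype x ≤ Submodule.comap N.subtype y :=
      Submodule.comap_mono hxy.le
    have hGle : Submodule.map N.mkQ x ≤ Submodule.map N.mkQ y :=
      Submodule.map_mono hxy.le
    have hFy : Order.height (Submodule.comap N.subtype y) ≠ ⊤ :=
      fun h => by simpa [h] using (hF y).trans_lt (ENat.coe_lt_top a)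
    have hGy : Order.height (Submodule.map N.mkQ y) ≠ ⊤ :=
      fun h => by simpa [h] using (hG y).trans_lt (ENat.coe_lt_top b)
    rcases hFle.lt_or_eq with h | h
    · have h1 := Order.height_strictMono h ((hF x).trans_lt (WithTop.coe_lt_top a))
      have h2 := ENat.toNat_le_toNat (Order.height_mono hGle) hGy
      have := enat_toNat_lt h1 hFy
      omega
    · -- comap equal : x ⊓ N = y ⊓ N
      have hinf : N ⊓ x = N ⊓ y := by
        rw [← Submodule.map_comap_subtype, ← Submodule.map_comap_subtype, h]
      have hsup : x ⊔ N < y ⊔ N :=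
        sup_lt_sup_of_lt_of_inf_le_inf hxy (le_of_eq (by rw [inf_comm y N, ← hinf, inf_comm N x]))
      have hne : Submodule.map N.mkQ x ≠ Submodule.map N.mkQ y := by
        intro he
        have : N ⊔ x = N ⊔ y := by
          rw [← Submodule.comap_map_mkQ, ← Submodule.comap_map_mkQ, he]
        rw [sup_comm, sup_comm N y] at this
        exact hsup.ne this
      have h1 := Order.height_strictMono (hGle.lt_of_ne hne)
        ((hG x).trans_lt (WithTop.coe_lt_top b))
      have h2 := ENat.toNat_le_toNat (Order.height_mono hFle) hFy
      have := enat_toNat_lt h1 hGy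
      omega
  · intro x
    exact Nat.add_le_add (ENat.toNat_le_of_le_coe (hF x)) (ENat.toNat_le_of_le_coe (hG x))

lemma field_krullDim {k M : Type*} [DivisionRing k] [AddCommGroup M] [Module k M]
    [Module.Finite k M] :
    Order.krullDim (Submodule k M) ≤ ((Module.finrank k M : ℕ) : WithBot ℕ∞) :=
  krullDim_le_of_natFun (fun W : Submodule k M => Module.finrank k (↥W)) (Module.finrank k M)
    (fun _ _ h => Submodule.finrank_lt_finrank_of_lt h) (fun W => Submodule.finrank_le W)

open IsLocalRing in
lemma base_krullDim {R : Type*} [CommRing R] [IsLocalRing R] (M : Type*) [AddCommGroup M]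
    [Module R M] [IsNoetherian R M]
    (hM : Module.IsTorsionBySet R M (maximalIdeal R : Set R)) :
    ∃ C : ℕ, Order.krullDim (Submodule R M) ≤ (C : WithBot ℕ∞) := by
  letI k := ResidueField R
  letI : Module k M := hM.module
  haveI : IsScalarTower R k M := hM.isScalarTower
  obtain ⟨S, hS⟩ := IsNoetherian.noetherian (⊤ : Submodule R M)
  have hspan : Submodule.span k (S : Set M) = ⊤ := by
    have h2 : Submodule.restrictScalars R (Submodule.span k (S : Set M)) = ⊤ :=
      top_le_iff.mp (hS ▸ Submodule.span_le_restrictScalars R k (S : Set M))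
    simpa using h2
  haveI : Module.Finite k M := ⟨⟨S, hspan⟩⟩
  have hφ : StrictMono (fun W : Submodule R M =>
    ({ carrier := W
       add_mem' := fun h1 h2 => W.add_mem h1 h2
       zero_mem' := W.zero_mem
       smul_mem' := by
         intro c x hx
         obtain ⟨c, rfl⟩ := Ideal.Quotient.mk_surjective c
         erw [hM.mk_smul]
         exact W.smul_mem c hx } : Submodule k M)) := by
    intro x y hxy
    refine lt_of_le_of_ne (fun z hz => hxy.le hz) (fun he => hxy.ne ?_)
    have hc := congrArg (fun (W : Submodule k M) => (W : Set M)) he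
    exact SetLike.coe_injective hc
  exact ⟨Module.finrank k M,
    (Order.krullDim_le_of_strictMono _ hφ).trans field_krullDim⟩

open IsLocalRing in
lemma fin_krullDim {R : Type u} [CommRing R] [IsLocalRing R] :
    ∀ (i : ℕ) (M : Type v) [AddCommGroup M] [Module R M] [IsNoetherian R M],
    ((maximalIdeal R) ^ i • (⊤ : Submodule R M) = ⊥) →
    ∃ C : ℕ, Order.krullDim (Submodule R M) ≤ (C : WithBot ℕ∞) := by
  intro i
  induction i with
  | zero =>
    intro M _ _ _ h
    rw [pow_zero, Ideal.one_eq_top, Submodule.top_smul] at h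
    haveI : Subsingleton M := by
      constructor
      intro x y
      have hx : x ∈ (⊥ : Submodule R M) := h ▸ Submodule.mem_top
      have hy : y ∈ (⊥ : Submodule R M) := h ▸ Submodule.mem_top
      rw [Submodule.mem_bot] at hx hy
      rw [hx, hy]
    exact ⟨0, by simpa using Order.krullDim_nonpos_of_subsingleton⟩
  | succ i ih =>
    intro M _ _ _ h
    set N : Submodule R M := (maximalIdeal R) ^ i • ⊤ with hN
    rw [pow_succ', ← Ideal.smul_eq_mul, Submodule.smul_assoc] at h
    have hNt : Module.IsTorsionBySet R N (maximalIdeal R : Set R) := by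
      intro x a
      have : (a : R) • (x : M) ∈ (maximalIdeal R) • N := Submodule.smul_mem_smul a.2 x.2
      rw [h] at this
      exact Subtype.ext (by simpa using this)
    obtain ⟨aC, haC⟩ := base_krullDim (R := R) N hNt
    have hQ : (maximalIdeal R) ^ i • (⊤ : Submodule R (M ⧸ N)) = ⊥ := by
      have h1 : (⊤ : Submodule R (M ⧸ N)) = Submodule.map N.mkQ ⊤ := by
        rw [Submodule.map_top, Submodule.range_mkQ]
      rw [h1, ← Submodule.map_smul'', ← hN]
      exact le_bot_iff.mp ((Submodule.map_mono (le_refl _)).trans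
        (by rw [Submodule.map_le_iff_le_comap]; intro z hz;
            simpa [Submodule.mem_comap] using (Submodule.Quotient.mk_eq_zero N).mpr hz))
    obtain ⟨bC, hbC⟩ := ih (M ⧸ N) hQ
    exact ⟨aC + bC, ext_krullDim N aC bC haC hbC⟩

lemma final_arith {x nn qq LL : ℝ} (h1 : 1 ≤ nn) (h2 : 0 ≤ x) (h3 : 0 ≤ qq)
    (hx : x ≤ nn * (qq + 1)) (hL : 2 * LL = (qq + 1) * (qq + 2)) :
    1 / (2 * nn ^ 2) * x ^ 2 ≤ LL := by
  rw [div_mul_eq_mul_div, one_mul, div_le_iff₀ (by positivity)]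
  nlinarith [sq_nonneg x, sq_nonneg (qq + 1), mul_self_nonneg nn]

lemma nat_le_toNat_unbot {L C : ℕ} {D : WithBot ℕ∞} (h1 : (L : WithBot ℕ∞) ≤ D)
    (h2 : D ≤ (C : WithBot ℕ∞)) : L ≤ (D.unbotD 0).toNat := by
  induction D using WithBot.recBotCoe with
  | bot => exact absurd h1 (by simp)
  | coe e =>
    have h1' : (L : ℕ∞) ≤ e := by exact_mod_cast h1
    have h2' : e ≤ (C : ℕ∞) := by exact_mod_cast h2
    have he : e ≠ ⊤ := (h2'.trans_lt (WithTop.coe_lt_top C)).ne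
    rw [WithBot.unbotD_coe]
    rw [← ENat.coe_toNat he] at h1'
    exact_mod_cast h1'

/-- let `(R,m)` be a 2-dimensional quasi-unmixed Noetherian local
ring and `v` an `m`-valuation of `R`, given by a minimal prime `p` with
`dim R/p = 2` and a discrete valuation ring `V` inside the fraction field of
`R/p`, containing `R/p`, dominating `R` (via the composite local homomorphism
`f : R → V`), and whose residue field is a finitely generated extension of the
residue field of `R` of transcendence degree `1`.  With
`c(v)_i = {a ∈ R : v(a) ≥ i} = f⁻¹(n_V^i)`, there exists `λ > 0` with
`ℓ(R/c(v)_i) ≥ λ i²` for all `i > 0`. -/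
theorem stmt_17 (R : Type*) [CommRing R] [IsNoetherianRing R] [IsLocalRing R]
    (hdim : ringKrullDim R = 2) (hqu : IsQuasiUnmixed R)
    (p : Ideal R) [p.IsPrime] (hp : p ∈ minimalPrimes R)
    (hdimp : ringKrullDim (R ⧸ p) = 2)
    (V : Subring (FractionRing (R ⧸ p))) [hdvr : IsDiscreteValuationRing V]
    (hbir : ∀ y : R ⧸ p, algebraMap (R ⧸ p) (FractionRing (R ⧸ p)) y ∈ V)
    (f : R →+* V)
    (hf : ∀ x : R, (f x : FractionRing (R ⧸ p)) =
      algebraMap (R ⧸ p) (FractionRing (R ⧸ p)) (Ideal.Quotient.mk p x))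
    [hloc : IsLocalHom f]
    (hdom : ∀ x ∈ IsLocalRing.maximalIdeal R, f x ∈ IsLocalRing.maximalIdeal V)
    [alg : Algebra (IsLocalRing.ResidueField R) (IsLocalRing.ResidueField V)]
    (halg : algebraMap (IsLocalRing.ResidueField R) (IsLocalRing.ResidueField V) =
      IsLocalRing.ResidueField.map f)
    (hfg : Algebra.FiniteType (IsLocalRing.ResidueField R) (IsLocalRing.ResidueField V))
    (htrans : ∃ t : IsLocalRing.ResidueField V,
      Transcendental (IsLocalRing.ResidueField R) t)
    (htrdeg : ¬ ∃ g : Fin 2 → IsLocalRing.ResidueField V,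
      AlgebraicIndependent (IsLocalRing.ResidueField R) g) :
    ∃ lam : ℝ, 0 < lam ∧ ∀ i : ℕ, 0 < i →
      lam * (i : ℝ) ^ 2 ≤
        rlen R (R ⧸ Ideal.comap f (IsLocalRing.maximalIdeal V ^ i)) := by
  classical
  obtain ⟨t, ht⟩ := htrans
  have ht0 : t ≠ 0 := fun h => ht (h ▸ isAlgebraic_zero)
  obtain ⟨u₀, hu₀⟩ := IsLocalRing.residue_surjective (R := V) t
  have hu₀unit : IsUnit u₀ := by
    by_contra hnu
    have hmem : u₀ ∈ IsLocalRing.maximalIdeal V := hnu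
    exact ht0 (hu₀ ▸ Ideal.Quotient.eq_zero_iff_mem.mpr hmem)
  obtain ⟨⟨a, b⟩, hab⟩ := IsLocalization.surj (nonZeroDivisors (R ⧸ p))
    ((u₀ : FractionRing (R ⧸ p)))
  obtain ⟨x₁', hx₁'⟩ := Ideal.Quotient.mk_surjective (I := p) (b : R ⧸ p)
  obtain ⟨x₂', hx₂'⟩ := Ideal.Quotient.mk_surjective (I := p) a
  have hpm : p < IsLocalRing.maximalIdeal R := by
    refine lt_of_le_of_ne (IsLocalRing.le_maximalIdeal ‹p.IsPrime›.ne_top) (fun he => ?_)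
    have hmax : p.IsMaximal := he ▸ IsLocalRing.maximalIdeal.isMaximal R
    have hfield : IsField (R ⧸ p) :=
      (Ideal.Quotient.maximal_ideal_iff_isField_quotient p).mp hmax
    have := ringKrullDim_eq_zero_of_isField hfield
    rw [hdimp] at this
    norm_num at this
  obtain ⟨z₀, hz₀m, hz₀p⟩ := SetLike.exists_of_lt hpm
  set x₁ : R := x₁' * z₀ with hx₁def
  set x₂ : R := x₂' * z₀ with hx₂def
  have hinj : Function.Injective (algebraMap (R ⧸ p) (FractionRing (R ⧸ p))) :=
    IsFractionRing.injective _ _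
  have hb0 : (b : R ⧸ p) ≠ 0 := nonZeroDivisors.coe_ne_zero b
  have hz₀0 : Ideal.Quotient.mk p z₀ ≠ 0 := fun h => hz₀p (Ideal.Quotient.eq_zero_iff_mem.mp h)
  have hfx₁K : ((f x₁ : V) : FractionRing (R ⧸ p)) =
      algebraMap _ _ (b : R ⧸ p) * algebraMap _ _ (Ideal.Quotient.mk p z₀) := by
    rw [hf, hx₁def, map_mul, hx₁', map_mul]
  have hfx₂K : ((f x₂ : V) : FractionRing (R ⧸ p)) =
      algebraMap _ _ a * algebraMap _ _ (Ideal.Quotient.mk p z₀) := by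
    rw [hf, hx₂def, map_mul, hx₂', map_mul]
  have hfx₁0 : f x₁ ≠ 0 := by
    intro h
    rw [h] at hfx₁K
    exact mul_ne_zero ((map_ne_zero_iff _ hinj).mpr hb0)
      ((map_ne_zero_iff _ hinj).mpr hz₀0) (by simpa using hfx₁K.symm)
  have hufx : f x₂ = u₀ * f x₁ := by
    apply Subtype.ext
    push_cast
    rw [hfx₁K, hfx₂K, ← mul_assoc, ← hab]
  obtain ⟨π, hπ⟩ := IsDiscreteValuationRing.exists_irreducible V
  have hspan : IsLocalRing.maximalIdeal V = Ideal.span {π} :=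
    (IsDiscreteValuationRing.irreducible_iff_uniformizer π).mp hπ
  have hfx₁mV : f x₁ ∈ IsLocalRing.maximalIdeal V := hdom x₁ (Ideal.mul_mem_left _ _ hz₀m)
  obtain ⟨n, w, hw⟩ := IsDiscreteValuationRing.eq_unit_mul_pow_irreducible hfx₁0 hπ
  have hn1 : 1 ≤ n := by
    rcases Nat.eq_zero_or_pos n with h0 | h
    · rw [h0, pow_zero, mul_one] at hw
      exact absurd ((IsLocalRing.maximalIdeal.isMaximal V).ne_top)
        (fun hne => hne (Ideal.eq_top_of_isUnit_mem _ (hw ▸ hfx₁mV) w.isUnit))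
    · exact h
  set c : ℕ → Ideal R := fun j => Ideal.comap f (IsLocalRing.maximalIdeal V ^ j) with hc
  have hmemc : ∀ (j : ℕ) (y : R), y ∈ c j ↔ π ^ j ∣ f y := by
    intro j y
    rw [hc]
    simp only [Ideal.mem_comap]
    rw [hspan, Ideal.span_singleton_pow, Ideal.mem_span_singleton]
  have hcanti : ∀ {j j' : ℕ}, j ≤ j' → c j' ≤ c j :=
    fun h => Ideal.comap_mono (Ideal.pow_le_pow_right h)
  have hfmono : ∀ r j : ℕ, j ≤ r →
      f (x₁ ^ (r - j) * x₂ ^ j) = (u₀ ^ j * (w : V) ^ r) * π ^ (n * r) := by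
    intro r j hjr
    rw [map_mul, map_pow, map_pow, hufx, hw, mul_pow u₀]
    calc ((w : V) * π ^ n) ^ (r - j) * (u₀ ^ j * ((w : V) * π ^ n) ^ j)
        = u₀ ^ j * (((w : V) * π ^ n) ^ (r - j) * ((w : V) * π ^ n) ^ j) := by ring
      _ = u₀ ^ j * ((w : V) * π ^ n) ^ r := by rw [← pow_add, Nat.sub_add_cancel hjr]
      _ = (u₀ ^ j * (w : V) ^ r) * π ^ (n * r) := by
          rw [mul_pow, ← pow_mul]; ring
  have hmono_mem : ∀ r j : ℕ, j ≤ r → x₁ ^ (r - j) * x₂ ^ j ∈ c (n * r) := by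
    intro r j h
    exact (hmemc _ _).mpr ⟨u₀ ^ j * (w : V) ^ r, by rw [hfmono r j h]; ring⟩
  have hρπ : IsLocalRing.residue V π = 0 :=
    Ideal.Quotient.eq_zero_iff_mem.mpr (hspan ▸ Ideal.subset_span rfl)
  have hρw : IsLocalRing.residue V (w : V) ≠ 0 :=
    (w.isUnit.map (IsLocalRing.residue V)).ne_zero
  have hkey : ∀ r s : ℕ, s ≤ r → x₁ ^ (r - s) * x₂ ^ s ∉
      c (n * r + 1) ⊔ Ideal.span (Set.range (fun j : Fin s => x₁ ^ (r - (j : ℕ)) * x₂ ^ (j : ℕ))) := by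
    intro r s hsr hmem
    rw [Submodule.mem_sup] at hmem
    obtain ⟨z, hz, y, hy, hzy⟩ := hmem
    rw [← Ideal.submodule_span_eq] at hy
    obtain ⟨cf, hcf⟩ := (Submodule.mem_span_range_iff_exists_fun R).mp hy
    obtain ⟨zv, hzv⟩ := (hmemc _ z).mp hz
    have hEq : (u₀ ^ s * (w : V) ^ r) * π ^ (n * r) =
        (π * zv + ∑ j : Fin s, f (cf j) * (u₀ ^ (j : ℕ) * (w : V) ^ r)) * π ^ (n * r) := by
      have h1 := congrArg f hzy.symm
      rw [map_add, hfmono r s hsr, ← hcf, map_sum] at h1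
      rw [h1, add_mul, Finset.sum_mul]
      congr 1
      · rw [hzv, pow_succ]; ring
      · refine Finset.sum_congr rfl fun j _ => ?_
        rw [smul_eq_mul, map_mul, hfmono r (j : ℕ) (le_of_lt (lt_of_lt_of_le j.isLt hsr))]
        ring
    have hEq2 : u₀ ^ s * (w : V) ^ r =
        π * zv + ∑ j : Fin s, f (cf j) * (u₀ ^ (j : ℕ) * (w : V) ^ r) :=
      mul_right_cancel₀ (pow_ne_zero (n * r) hπ.ne_zero) hEq
    have hres := congrArg (IsLocalRing.residue V) hEq2
    rw [map_add, map_mul, map_mul, map_pow, map_pow, hρπ, hu₀, map_sum, zero_mul, zero_add] at hres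
    have hres2 : t ^ s * (IsLocalRing.residue V (w : V)) ^ r =
        (∑ j : Fin s, IsLocalRing.residue V (f (cf j)) * t ^ (j : ℕ)) *
          (IsLocalRing.residue V (w : V)) ^ r := by
      rw [hres, Finset.sum_mul]
      refine Finset.sum_congr rfl fun j _ => ?_
      rw [map_mul, map_mul, map_pow, map_pow, hu₀]
      ring
    have hT : t ^ s = ∑ j : Fin s, IsLocalRing.residue V (f (cf j)) * t ^ (j : ℕ) :=
      mul_right_cancel₀ (pow_ne_zero r hρw) hres2
    refine ht ⟨Polynomial.X ^ s - ∑ j : Fin s,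
      Polynomial.C (IsLocalRing.residue R (cf j)) * Polynomial.X ^ (j : ℕ), ?_, ?_⟩
    · intro h0
      have hcoeff := congrArg (fun q => Polynomial.coeff q s) h0
      simp only [Polynomial.coeff_sub, Polynomial.coeff_X_pow, if_pos rfl,
        Polynomial.finset_sum_coeff, Polynomial.coeff_C_mul, Polynomial.coeff_zero] at hcoeff
      rw [Finset.sum_eq_zero (fun (j : Fin s) _ => by
        rw [if_neg (by have := j.isLt; omega), mul_zero])] at hcoeff
      simp at hcoeff
    · rw [map_sub, map_pow, Polynomial.aeval_X, map_sum]
      rw [hT]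
      rw [sub_eq_zero]
      refine Finset.sum_congr rfl fun j _ => ?_
      rw [map_mul, map_pow, Polynomial.aeval_X, Polynomial.aeval_C, halg,
        IsLocalRing.ResidueField.map_residue]
  set J : ℕ → ℕ → Ideal R := fun r s =>
    c (n * r + 1) ⊔ Ideal.span (Set.range (fun j : Fin s => x₁ ^ (r - (j : ℕ)) * x₂ ^ (j : ℕ)))
    with hJ
  have hJ0 : ∀ r, J r 0 = c (n * r + 1) := by
    intro r
    rw [hJ]
    simp only [Set.range_eq_empty, Ideal.span_empty, sup_bot_eq]
  have hJmono : ∀ r (s s' : ℕ), s ≤ s' → J r s ≤ J r s' := by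
    intro r s s' h
    refine sup_le_sup_left (Ideal.span_mono ?_) _
    rintro _ ⟨j, rfl⟩
    exact ⟨⟨(j : ℕ), lt_of_lt_of_le j.isLt h⟩, rfl⟩
  have hmonoJ : ∀ r s : ℕ, x₁ ^ (r - s) * x₂ ^ s ∈ J r (s + 1) :=
    fun r s => Submodule.mem_sup_right (Ideal.subset_span ⟨⟨s, Nat.lt_succ_self s⟩, rfl⟩)
  have hJstrict : ∀ r s : ℕ, s ≤ r → J r s < J r (s + 1) := by
    intro r s h
    refine lt_of_le_of_ne (hJmono r s (s + 1) (Nat.le_succ s)) (fun he => ?_)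
    have hm := hmonoJ r s
    rw [← he] at hm
    simp only [hJ] at hm
    exact hkey r s h hm
  have hJtop : ∀ r s : ℕ, s ≤ r + 1 → J r s ≤ c (n * r) := by
    intro r s hs
    rw [hJ]
    refine sup_le (hcanti (Nat.le_succ _)) ?_
    rw [Ideal.span_le]
    rintro _ ⟨j, rfl⟩
    exact hmono_mem r (j : ℕ) (by have := j.isLt; omega)
  have hcross : ∀ q : ℕ, J (q + 1) (q + 2) < J q 1 := by
    intro q
    have h1 : J (q + 1) (q + 2) ≤ c (n * q + 1) :=
      (hJtop (q + 1) (q + 2) le_rfl).trans (hcanti (by nlinarith))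
    have h2 : J (q + 1) (q + 2) ≤ J q 1 := h1.trans ((hJ0 q) ▸ hJmono q 0 1 (Nat.zero_le 1))
    refine lt_of_le_of_ne h2 (fun he => ?_)
    have hm := hmonoJ q 0
    rw [← he] at hm
    have hm2 : x₁ ^ (q - 0) * x₂ ^ 0 ∈ c (n * q + 1) := h1 hm
    refine hkey q 0 (Nat.zero_le q) (Submodule.mem_sup_left hm2)
  have hchain : ∀ q : ℕ, ∃ P : LTSeries (Ideal R),
      P.head = J q 1 ∧ 2 * (P.length + 1) = (q + 1) * (q + 2) := by
    intro q
    induction q with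
    | zero =>
      exact ⟨RelSeries.singleton _ (J 0 1), RelSeries.head_singleton _, by norm_num⟩
    | succ q ih =>
      obtain ⟨P, hPhead, hPlen⟩ := ih
      set piece : LTSeries (Ideal R) :=
        ⟨q + 1, fun s => J (q + 1) ((s : ℕ) + 1), fun i => by
          refine hJstrict (q + 1) ((i : ℕ) + 1) (by have := i.isLt; omega)⟩ with hpiece
      have hconn : piece.last < P.head := by
        rw [hPhead]
        exact hcross q
      refine ⟨piece.append P hconn, ?_, ?_⟩
      · rw [RelSeries.head_append]
        rfl
      · rw [RelSeries.append_length]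
        have harith : (q + 1 + 1) * (q + 1 + 2) = (q + 1) * (q + 2) + 2 * (q + 2) := by ring
        rw [harith]
        have hpl : piece.length = q + 1 := rfl
        omega
  refine ⟨1 / (2 * (n : ℝ) ^ 2), by positivity, ?_⟩
  intro i hi
  rw [show Ideal.comap f (IsLocalRing.maximalIdeal V ^ i) = c i from rfl]
  set q := (i - 1) / n with hq
  have h1 : n * q ≤ i - 1 := by rw [mul_comm]; exact Nat.div_mul_le_self _ _
  have hqi : n * q + 1 ≤ i := by omega
  have hiq : i ≤ n * (q + 1) := by
    have h3 := Nat.div_add_mod (i - 1) n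
    have h4 : (i - 1) % n < n := Nat.mod_lt _ (by omega)
    have h5 : n * (q + 1) = n * q + n := by ring
    rw [hq] at h5 ⊢
    omega
  obtain ⟨P, hPhead, hPlen⟩ := hchain q
  have hconn0 : (RelSeries.singleton {(a, b) : Ideal R × Ideal R | a < b} (J q 0)).last
      < P.head := by
    rw [RelSeries.last_singleton, hPhead]
    exact hJstrict q 0 (Nat.zero_le q)
  set F := (RelSeries.singleton {(a, b) : Ideal R × Ideal R | a < b} (J q 0)).append P hconn0
    with hF
  have hFlen' : F.length = P.length + 1 := by rw [hF, RelSeries.append_length]; simp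
  have hFlen : 2 * F.length = (q + 1) * (q + 2) := by omega
  have hFhead : F.head = J q 0 := by rw [hF, RelSeries.head_append, RelSeries.head_singleton]
  have hFge : ∀ idx, c i ≤ F idx := by
    intro idx
    have h6 : F.head ≤ F idx := (LTSeries.strictMono F).monotone (Fin.zero_le idx)
    rw [hFhead, hJ0] at h6
    exact le_trans (hcanti hqi) h6
  have hmapstrict : ∀ J1 J2 : Ideal R, c i ≤ J1 → J1 < J2 →
      Submodule.map (c i).mkQ J1 < Submodule.map (c i).mkQ J2 := by
    intro J1 J2 hle hlt
    refine lt_of_le_of_ne (Submodule.map_mono hlt.le) (fun he => ?_)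
    have h7 := congrArg (Submodule.comap (c i).mkQ) he
    rw [Submodule.comap_map_mkQ, Submodule.comap_map_mkQ,
      sup_eq_right.mpr hle, sup_eq_right.mpr (hle.trans hlt.le)] at h7
    exact hlt.ne h7
  set Q : LTSeries (Submodule R (R ⧸ c i)) :=
    ⟨F.length, fun idx => Submodule.map (c i).mkQ (F idx), fun idx =>
      hmapstrict _ _ (hFge _) (F.step idx)⟩ with hQdef
  have hdimge : ((F.length : ℕ) : WithBot ℕ∞) ≤ Order.krullDim (Submodule R (R ⧸ c i)) :=
    Order.LTSeries.length_le_krullDim Q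
  have hmi : (IsLocalRing.maximalIdeal R) ^ i ≤ c i := by
    have hmle : IsLocalRing.maximalIdeal R ≤ Ideal.comap f (IsLocalRing.maximalIdeal V) :=
      fun x hx => hdom x hx
    refine le_trans (Ideal.pow_right_mono hmle i) ?_
    rw [hc, ← Ideal.map_le_iff_le_comap, Ideal.map_pow]
    exact Ideal.pow_right_mono Ideal.map_comap_le i
  have hsmul : (IsLocalRing.maximalIdeal R) ^ i • (⊤ : Submodule R (R ⧸ c i)) = ⊥ := by
    refine le_bot_iff.mp (Submodule.smul_le.mpr ?_)
    rintro rr hr x -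
    obtain ⟨y, rfl⟩ := Submodule.mkQ_surjective (c i) x
    rw [Submodule.mem_bot, ← map_smul, Submodule.mkQ_apply, Submodule.Quotient.mk_eq_zero]
    rw [smul_eq_mul]
    exact Ideal.mul_mem_right y _ (hmi hr)
  obtain ⟨C, hC⟩ := fin_krullDim i (R ⧸ c i) hsmul
  have hlen_le : F.length ≤ ((Order.krullDim (Submodule R (R ⧸ c i))).unbotD 0).toNat :=
    nat_le_toNat_unbot hdimge hC
  have hrlen : ((F.length : ℕ) : ℝ) ≤ rlen R (R ⧸ c i) := by
    rw [rlen]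
    exact_mod_cast hlen_le
  have hcast : (i : ℝ) ≤ (n : ℝ) * ((q : ℝ) + 1) := by exact_mod_cast hiq
  have hFlenR : 2 * ((F.length : ℕ) : ℝ) = ((q : ℝ) + 1) * ((q : ℝ) + 2) := by
    exact_mod_cast hFlen
  have hn1R : (1 : ℝ) ≤ (n : ℝ) := by exact_mod_cast hn1
  exact le_trans (final_arith hn1R (Nat.cast_nonneg i) (Nat.cast_nonneg q) hcast hFlenR) hrlen
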